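/- Let μ_p be a distribution on ℝ × {−1,+1} and b_p a bias such that the first-order optimality condition g(b_p) = −ε·(d/db)L(h_{1,b}; μ_p)|_{b=b_p} holds, where (d/db)ℓ(h_{1,b}; x, y) ∈ [−1, 1] pointwise. Then g(b_p) ∈ [−ε, ε]. Conversely, given any b with g(b) ∈ [−ε, ε], setting α = 1/2 + g(b)/(2ε) ∈ [0, 1], the two-point distribution ν_α (mass α at (−u,+1), mass 1−α at (u,−1), with |b| ≤ u so both points are within margin) satisfies g(b) = −ε·(d/db)L(h_{1,b}; ν_α) = ε(2α − 1), i.e., b satisfies the first-order optimality condition for the poisoned objective with μ_p = ν_α. -/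

import Mathlib

open MeasureTheory

/-- The two-point distribution `ν_α`: mass `α` on `(−u, +1)` and mass `1−α` on `(u, −1)`. -/
noncomputable def nuTwo (u α : ℝ) : Measure (ℝ × ℝ) :=
  ENNReal.ofReal α • Measure.dirac ((-u, 1) : ℝ × ℝ) +
  ENNReal.ofReal (1 - α) • Measure.dirac ((u, -1) : ℝ × ℝ)

lemma integral_nuTwo (u α : ℝ) (f : ℝ × ℝ → ℝ) :
    ∫ z, f z ∂(nuTwo u α) =
      (ENNReal.ofReal α).toReal * f (-u, 1) + (ENNReal.ofReal (1 - α)).toReal * f (u, -1) := by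
  have h1 : Integrable f (ENNReal.ofReal α • Measure.dirac ((-u, 1) : ℝ × ℝ)) :=
    ((integrable_const (f (-u, 1))).congr (ae_eq_dirac f).symm).smul_measure ENNReal.ofReal_ne_top
  have h2 : Integrable f (ENNReal.ofReal (1 - α) • Measure.dirac ((u, -1) : ℝ × ℝ)) :=
    ((integrable_const (f (u, -1))).congr (ae_eq_dirac f).symm).smul_measure ENNReal.ofReal_ne_top
  rw [nuTwo, integral_add_measure h1 h2, integral_smul_measure, integral_smul_measure,
    integral_dirac, integral_dirac, smul_eq_mul, smul_eq_mul]

theorem stmt19 (g : ℝ → ℝ) (ε u : ℝ) (hε : 0 < ε) (hu : 0 < u) :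
    -- Part 1: first-order optimality for the poisoned objective forces g(b_p) ∈ [−ε, ε]
    (∀ (μp : Measure (ℝ × ℝ)), IsProbabilityMeasure μp →
      μp ({z : ℝ × ℝ | z.2 = 1 ∨ z.2 = -1})ᶜ = 0 →
      ∀ (bp D : ℝ),
        HasDerivAt (fun b => ∫ z, max 0 (1 - z.2 * (z.1 + b)) ∂μp) D bp →
        g bp = -ε * D →
        -ε ≤ g bp ∧ g bp ≤ ε) ∧
    -- Part 2: conversely, ν_α with α = 1/2 + g(b)/(2ε) realizes the optimality condition
    (∀ b : ℝ, -ε ≤ g b → g b ≤ ε → |b| ≤ u →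
      let α := 1 / 2 + g b / (2 * ε)
      0 ≤ α ∧ α ≤ 1 ∧
      HasDerivAt (fun b' => ∫ z, max 0 (1 - z.2 * (z.1 + b')) ∂(nuTwo u α)) (1 - 2 * α) b ∧
      g b = -ε * (1 - 2 * α) ∧ g b = ε * (2 * α - 1)) := by
  constructor
  · intro μp hprob hsupp bp D hD hg
    -- set f b z := max 0 (1 - z.2 * (z.1 + b))
    set f : ℝ → ℝ × ℝ → ℝ := fun b z => max 0 (1 - z.2 * (z.1 + b)) with hf
    have hcont : ∀ b, Continuous (f b) := by
      intro b
      exact continuous_const.max (by fun_prop)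
    have hae : ∀ᵐ z ∂μp, z.2 = 1 ∨ z.2 = -1 := by
      rw [ae_iff]
      simpa [Set.compl_setOf, not_or] using hsupp
    have hy : ∀ᵐ z ∂μp, |z.2| = 1 := by
      filter_upwards [hae] with z hz
      rcases hz with hz | hz <;> simp [hz]
    have hptw : ∀ b1 b2 : ℝ, ∀ᵐ z ∂μp, |f b1 z - f b2 z| ≤ |b1 - b2| := by
      intro b1 b2
      filter_upwards [hy] with z hz
      have : |f b1 z - f b2 z| ≤ |(1 - z.2 * (z.1 + b1)) - (1 - z.2 * (z.1 + b2))| := by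
        simpa [hf, max_comm] using
          abs_max_sub_max_le_abs (1 - z.2 * (z.1 + b1)) (1 - z.2 * (z.1 + b2)) 0
      refine this.trans (le_of_eq ?_)
      have : (1 - z.2 * (z.1 + b1)) - (1 - z.2 * (z.1 + b2)) = z.2 * (b2 - b1) := by ring
      rw [this, abs_mul, hz, one_mul, abs_sub_comm]
    -- integrability transfers
    have htrans : ∀ b1 b2 : ℝ, Integrable (f b1) μp → Integrable (f b2) μp := by
      intro b1 b2 h1
      refine Integrable.mono' (h1.norm.add (integrable_const |b1 - b2|))
        (hcont b2).aestronglyMeasurable ?_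
      filter_upwards [hptw b1 b2] with z hz
      have h3 := abs_sub_abs_le_abs_sub (f b2 z) (f b1 z)
      simp only [Pi.add_apply, Real.norm_eq_abs]
      rw [abs_sub_comm] at hz
      linarith
    by_cases hI : Integrable (f bp) μp
    · -- Lipschitz with constant 1 near bp
      have hlip : ∀ b : ℝ, |(∫ z, f b z ∂μp) - ∫ z, f bp z ∂μp| ≤ |b - bp| := by
        intro b
        have hb : Integrable (f b) μp := htrans bp b hI
        rw [← integral_sub hb hI]
        have hnorm := norm_integral_le_of_norm_le_const (μ := μp)
          (f := fun z => f b z - f bp z) (C := |b - bp|)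
          ((hptw b bp).mono fun z hz => by simpa [Real.norm_eq_abs] using hz)
        simpa [Real.norm_eq_abs] using hnorm
      have hD1 : ‖D‖ ≤ 1 := by
        have := hD.hasFDerivAt.le_of_lip' (C := 1) zero_le_one ?_
        · simpa [ContinuousLinearMap.norm_smulRight_apply] using this
        · filter_upwards with b
          simpa [Real.norm_eq_abs, one_mul] using hlip b
      rw [Real.norm_eq_abs, abs_le] at hD1
      constructor
      · rw [hg]; nlinarith [hD1.1, hD1.2]
      · rw [hg]; nlinarith [hD1.1, hD1.2]
    · -- integral is identically zero, so D = 0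
      have hzero : (fun b => ∫ z, f b z ∂μp) = fun _ => (0 : ℝ) := by
        funext b
        exact integral_undef (fun h => hI (htrans b bp h))
      rw [hzero] at hD
      have : D = 0 := hD.unique (hasDerivAt_const bp 0)
      rw [hg, this, mul_zero]
      constructor <;> [linarith; linarith]
  · intro b hge hle hb α
    have hεne : (2 * ε) ≠ 0 := by positivity
    have hα0 : 0 ≤ α := by
      have : -(1/2 : ℝ) ≤ g b / (2 * ε) := by
        rw [le_div_iff₀ (by positivity)]; linarith
      simp only [α]; linarith
    have hα1 : α ≤ 1 := by
      have : g b / (2 * ε) ≤ 1/2 := by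
        rw [div_le_iff₀ (by positivity)]; linarith
      simp only [α]; linarith
    have hgb : g b = ε * (2 * α - 1) := by
      simp only [α]; field_simp; ring
    refine ⟨hα0, hα1, ?_, by rw [hgb]; ring, hgb⟩
    -- the integral equals an affine function near b
    have hGd : HasDerivAt (fun b' : ℝ => α * (1 + u - b') + (1 - α) * (1 + u + b'))
        (1 - 2 * α) b := by
      have h1 : HasDerivAt (fun b' : ℝ => α * (1 + u - b')) (-α) b := by
        simpa using (((hasDerivAt_id b).const_sub (1 + u)).const_mul α)
      have h2 : HasDerivAt (fun b' : ℝ => (1 - α) * (1 + u + b')) (1 - α) b := by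
        simpa using (((hasDerivAt_id b).const_add (1 + u)).const_mul (1 - α))
      have := h1.add h2
      exact this.congr_deriv (by ring)
    refine hGd.congr_of_eventuallyEq ?_
    have hmem : {b' : ℝ | |b'| < u + 1} ∈ nhds b := by
      have : |b| < u + 1 := lt_of_le_of_lt hb (by linarith)
      exact (isOpen_lt (by fun_prop) continuous_const).mem_nhds this
    filter_upwards [hmem] with b' hb'
    simp only [Set.mem_setOf_eq, abs_lt] at hb'
    rw [integral_nuTwo, ENNReal.toReal_ofReal hα0, ENNReal.toReal_ofReal (by linarith)]
    have e1 : max 0 (1 - (1 : ℝ) * (-u + b')) = 1 + u - b' := by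
      rw [max_eq_right] <;> [ring; linarith]
    have e2 : max 0 (1 - (-1 : ℝ) * (u + b')) = 1 + u + b' := by
      rw [max_eq_right] <;> [ring; linarith]
    simp only [e1, e2]
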